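/- Let t, M, n be positive natural numbers, let ε and γ be real numbers with ε > 0 and 0 < γ < 1. Let X be a real t×M matrix all of whose entries are nonzero, for each (τ,μ) let a^{τ,μ} ∈ ℝⁿ be a vector all of whose components are nonzero, and let v ∈ ℝⁿ be nonzero. Define W ∈ ℝⁿ by W_k = Σ_{τ,μ} X_{τμ}·a^{τ,μ}_k/‖a^{τ,μ}‖, and let Z be a random variable taking the value v_k·(‖a^{τ,μ}‖/a^{τ,μ}_k)·(‖X‖_F²/X_{τμ}) with probability (X_{τμ}²/‖X‖_F²)·((a^{τ,μ}_k)²/‖a^{τ,μ}‖²). Set ε' = ε·max{1, |⟨W,v⟩|}/(√(tM)·‖v‖·‖X‖_F), let n₀ be a natural number with n₀ ≥ 4/ε'², and let Q be an odd natural number with Q ≥ 8·ln(1/γ). If S is the median of Q independent averages, each of n₀ independent copies of Z, then ℙ(|S − ⟨W,v⟩| ≤ ε·max{1, |⟨W,v⟩|}) ≥ 1 − γ. -/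

import Mathlib

open MeasureTheory ProbabilityTheory RealInnerProductSpace

/-- The median of a finite family of reals: the `(Q/2)`-th element (0-indexed) of
the sorted list, i.e. for odd `Q` the `((Q+1)/2)`-th smallest value. -/
noncomputable def median {Q : ℕ} (z : Fin Q → ℝ) : ℝ :=
  ((List.ofFn z).insertionSort (· ≤ ·)).getD (Q / 2) 0


lemma countP_ofFn_eq_card {Q : ℕ} (z : Fin Q → ℝ) (p : ℝ → Bool) :
    (List.ofFn z).countP p = (Finset.univ.filter (fun q => p (z q))).card := by
  classical
  have h1 : (List.ofFn z).countP p
      = Multiset.countP (fun x => p x = true) (List.ofFn z : Multiset ℝ) := by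
    rw [Multiset.coe_countP]; congr 1; funext x; simp
  rw [h1, ← Fin.univ_val_map, Multiset.countP_map]
  rfl

lemma abs_median_sub_le {Q : ℕ} (hQ : Odd Q) (z : Fin Q → ℝ) (c εa : ℝ)
    (h : Q / 2 + 1 ≤ (Finset.univ.filter (fun q => |z q - c| ≤ εa)).card) :
    |median z - c| ≤ εa := by
  classical
  obtain ⟨m, hm⟩ := hQ
  have hQpos : 0 < Q := by omega
  have hQ2 : Q / 2 = m := by omega
  set l := (List.ofFn z).insertionSort (· ≤ ·) with hl
  have hlen : l.length = Q := by
    rw [hl, List.length_insertionSort, List.length_ofFn]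
  have hmlt : Q / 2 < l.length := by rw [hlen]; omega
  have hmed : median z = l[Q/2] := List.getD_eq_getElem l 0 hmlt
  have hsorted : l.Pairwise (· ≤ ·) := List.pairwise_insertionSort _ _
  have hperm : l.Perm (List.ofFn z) := List.perm_insertionSort _ _
  have hbad : (Finset.univ.filter (fun q => ¬(|z q - c| ≤ εa))).card ≤ m := by
    have := Finset.card_filter_add_card_filter_not
      (s := (Finset.univ : Finset (Fin Q))) (fun q => |z q - c| ≤ εa)
    rw [Finset.card_univ, Fintype.card_fin] at this
    omega
  have hcount : ∀ p : ℝ → Bool, (∀ x, p x = true → ¬(|x - c| ≤ εa)) →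
      l.countP p ≤ m := by
    intro p hp
    rw [hperm.countP_eq, countP_ofFn_eq_card]
    refine le_trans (Finset.card_le_card ?_) hbad
    intro q hq
    simp only [Finset.mem_filter, Finset.mem_univ, true_and] at hq ⊢
    exact hp _ hq
  have hlb : c - εa ≤ l[Q/2] := by
    by_contra hlt
    push_neg at hlt
    set p : ℝ → Bool := fun x => decide (x < c - εa) with hp
    have h1 : (l.take (Q/2 + 1)).countP p = (l.take (Q/2+1)).length := by
      rw [List.countP_eq_length]
      intro x hx
      obtain ⟨i, hi, hgi⟩ := List.mem_iff_getElem.1 hx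
      have hil : i < l.length := by
        have := hi; rw [List.length_take] at this; omega
      have hle : l[i] ≤ l[Q/2] := by
        have hi2 : i ≤ Q/2 := by
          have := hi; rw [List.length_take] at this; omega
        rcases eq_or_lt_of_le hi2 with he | hlt2
        · simp [he]
        · exact hsorted.rel_get_of_lt (a := ⟨i, hil⟩) (b := ⟨Q/2, hmlt⟩) (Fin.mk_lt_mk.2 hlt2)
      rw [← hgi, List.getElem_take]
      simp only [hp, decide_eq_true_eq]
      linarith
    have h2 : (l.take (Q/2+1)).length = Q/2 + 1 := by
      rw [List.length_take]; omega
    have h3 : Q/2 + 1 ≤ l.countP p := by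
      rw [← h2, ← h1]; exact (List.take_sublist _ _).countP_le
    have h4 : l.countP p ≤ m := by
      refine hcount p fun x hx => ?_
      simp only [hp, decide_eq_true_eq] at hx
      intro habs
      rw [abs_le] at habs
      linarith [habs.1]
    omega
  have hub : l[Q/2] ≤ c + εa := by
    by_contra hlt
    push_neg at hlt
    set p : ℝ → Bool := fun x => decide (c + εa < x) with hp
    have h1 : (l.drop (Q/2)).countP p = (l.drop (Q/2)).length := by
      rw [List.countP_eq_length]
      intro x hx
      obtain ⟨i, hi, hgi⟩ := List.mem_iff_getElem.1 hx
      have hil : Q/2 + i < l.length := by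
        have := hi; rw [List.length_drop] at this; omega
      have hle : l[Q/2] ≤ l[Q/2 + i] := by
        rcases Nat.eq_zero_or_pos i with he | hpos
        · simp [he]
        · exact hsorted.rel_get_of_lt (a := ⟨Q/2, hmlt⟩) (b := ⟨Q/2 + i, hil⟩) (Fin.mk_lt_mk.2 (by omega))
      rw [← hgi, List.getElem_drop]
      simp only [hp, decide_eq_true_eq]
      linarith
    have h2 : (l.drop (Q/2)).length = m + 1 := by
      rw [List.length_drop]; omega
    have h3 : m + 1 ≤ l.countP p := by
      rw [← h2, ← h1]; exact (List.drop_sublist _ _).countP_le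
    have h4 : l.countP p ≤ m := by
      refine hcount p fun x hx => ?_
      simp only [hp, decide_eq_true_eq] at hx
      intro habs
      rw [abs_le] at habs
      linarith [habs.2]
    omega
  rw [hmed]
  rw [abs_le]
  constructor <;> linarith

lemma iIndepFun_blocks {Ω E : Type*} [MeasurableSpace Ω] {QN nN : ℕ}
    [MeasurableSpace E] [DiscreteMeasurableSpace E] [Finite E]
    {P : Measure Ω} [IsProbabilityMeasure P]
    (U : Fin QN → Fin nN → Ω → E) (hm : ∀ q i, Measurable (U q i))
    (hindep : iIndepFun (fun qi : Fin QN × Fin nN => U qi.1 qi.2) P) :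
    iIndepFun (fun q ω i => U q i ω) P := by
  classical
  rw [iIndepFun_iff_measure_inter_preimage_eq_mul]
  intro S sets _
  induction S using Finset.induction_on with
  | empty => simp
  | insert q₀ S' hq₀ ih =>
    rw [Finset.set_biInter_insert, Finset.prod_insert hq₀, ← ih (fun i hi => .of_discrete)]
    -- independence of block {q₀} and blocks S'
    have hdisj : Disjoint (({q₀} : Finset (Fin QN)) ×ˢ Finset.univ)
        (S' ×ˢ (Finset.univ : Finset (Fin nN))) := by
      rw [Finset.disjoint_left]
      rintro ⟨q, i⟩ hq hq'
      simp only [Finset.mem_product, Finset.mem_singleton] at hq hq'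
      exact hq₀ (hq.1 ▸ hq'.1)
    have hIF := hindep.indepFun_finset _ _ hdisj (fun qi => hm qi.1 qi.2)
    set S₀ := (({q₀} : Finset (Fin QN)) ×ˢ (Finset.univ : Finset (Fin nN))) with hS₀
    set T₀ := (S' ×ˢ (Finset.univ : Finset (Fin nN))) with hT₀
    set B₀ : Set (S₀ → E) :=
      {h | (fun i : Fin nN => h ⟨(q₀, i), by simp [hS₀]⟩) ∈ sets q₀} with hB₀
    set B₁ : Set (T₀ → E) :=
      {h | ∀ q (hq : q ∈ S'),
        (fun i : Fin nN => h ⟨(q, i), by simp [hT₀, hq]⟩) ∈ sets q} with hB₁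
    have key := hIF.measure_inter_preimage_eq_mul B₀ B₁ .of_discrete .of_discrete
    have e0 : (fun a (i : S₀) => U i.1.1 i.1.2 a) ⁻¹' B₀
        = (fun q ω (i : Fin nN) => U q i ω) q₀ ⁻¹' sets q₀ := rfl
    have e1 : (fun a (i : T₀) => U i.1.1 i.1.2 a) ⁻¹' B₁
        = ⋂ q ∈ S', (fun q ω (i : Fin nN) => U q i ω) q ⁻¹' sets q := by
      ext ω
      simp only [Set.mem_preimage, hB₁, Set.mem_setOf_eq, Set.mem_iInter]
    rw [e0, e1] at key
    exact key

lemma integral_comp_fintype {Ω E : Type*} [MeasurableSpace Ω] [MeasurableSpace E]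
    [Fintype E] [MeasurableSingletonClass E]
    (P : Measure Ω) [IsProbabilityMeasure P] (g : Ω → E) (hg : Measurable g) (f : E → ℝ) :
    ∫ ω, f (g ω) ∂P = ∑ x, (P (g ⁻¹' {x})).toReal * f x := by
  have h1 : ∫ ω, f (g ω) ∂P = ∫ x, f x ∂(P.map g) :=
    (integral_map hg.aemeasurable Measurable.of_discrete.aestronglyMeasurable).symm
  have : IsProbabilityMeasure (P.map g) := Measure.isProbabilityMeasure_map hg.aemeasurable
  rw [h1, integral_fintype (Integrable.of_finite)]
  refine Finset.sum_congr rfl fun x _ => ?_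
  rw [Measure.real, Measure.map_apply hg (measurableSet_singleton x), smul_eq_mul]

set_option maxHeartbeats 1600000 in
/-- Full correctness of the quantum-inspired classical inner product estimation:
the median of `Q` independent averages, each of `n₀` independent copies of the
random variable `Z` (sampled according to the `ℓ₂`-BST distribution), estimates
`⟪W, v⟫` to error `ε·max{1, |⟪W,v⟫|}` with probability at least `1 - γ`. -/
theorem quantum_inspired_ipe_correctness
    {t M n : ℕ} (ht : 0 < t) (hM : 0 < M) (hn : 0 < n)
    (ε γ : ℝ) (hε : 0 < ε) (hγ0 : 0 < γ) (hγ1 : γ < 1)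
    (X : Matrix (Fin t) (Fin M) ℝ) (hX : ∀ τ μ, X τ μ ≠ 0)
    (a : Fin t → Fin M → EuclideanSpace ℝ (Fin n)) (ha : ∀ τ μ k, a τ μ k ≠ 0)
    (v : EuclideanSpace ℝ (Fin n)) (hv : v ≠ 0)
    (W : EuclideanSpace ℝ (Fin n))
    (hW : ∀ k, W k = ∑ τ, ∑ μ, X τ μ * a τ μ k / ‖a τ μ‖)
    (XF : ℝ) (hXF : XF = Real.sqrt (∑ τ, ∑ μ, (X τ μ) ^ 2))
    (Zval : Fin t × Fin M × Fin n → ℝ)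
    (hZval : ∀ τ μ k, Zval (τ, μ, k) = v k * (‖a τ μ‖ / a τ μ k) * (XF ^ 2 / X τ μ))
    (ε' : ℝ)
    (hε' : ε' = ε * max 1 |⟪W, v⟫| / (Real.sqrt (t * M) * ‖v‖ * XF))
    (n₀ Q : ℕ) (hn₀pos : 0 < n₀) (hQpos : 0 < Q)
    (hn₀ : (4 : ℝ) / ε' ^ 2 ≤ n₀) (hQodd : Odd Q) (hQ : 8 * Real.log (1 / γ) ≤ Q)
    {Ω : Type*} [MeasurableSpace Ω] (P : Measure Ω) [IsProbabilityMeasure P]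
    (U : Fin Q → Fin n₀ → Ω → Fin t × Fin M × Fin n)
    (hmeas : ∀ q i, Measurable (U q i))
    (hindep : iIndepFun
      (fun qi : Fin Q × Fin n₀ => U qi.1 qi.2) P)
    (hdist : ∀ q i τ μ k, P {ω | U q i ω = (τ, μ, k)}
      = ENNReal.ofReal ((X τ μ) ^ 2 / XF ^ 2 * ((a τ μ k) ^ 2 / ‖a τ μ‖ ^ 2))) :
    ENNReal.ofReal (1 - γ)
      ≤ P {ω | |median (fun q => (1 / n₀ : ℝ) * ∑ i, Zval (U q i ω)) - ⟪W, v⟫|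
            ≤ ε * max 1 |⟪W, v⟫|} := by
  classical
  -- notation
  set c : ℝ := ⟪W, v⟫ with hc
  set εa : ℝ := ε * max 1 |⟪W, v⟫| with hεa_def
  have hεa : 0 < εa := mul_pos hε (lt_of_lt_of_le one_pos (le_max_left _ _))
  -- positivity facts
  have hXF2 : XF ^ 2 = ∑ τ, ∑ μ, (X τ μ)^2 := by
    rw [hXF, Real.sq_sqrt (by positivity)]
  have hXFpos : 0 < XF := by
    rw [hXF]
    refine Real.sqrt_pos.2 (Finset.sum_pos' (fun τ _ => Finset.sum_nonneg fun μ _ => sq_nonneg _)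
      ⟨⟨0, ht⟩, Finset.mem_univ _, Finset.sum_pos' (fun μ _ => sq_nonneg _)
        ⟨⟨0, hM⟩, Finset.mem_univ _, pow_two_pos_of_ne_zero (hX _ _)⟩⟩)
  have hnormv : 0 < ‖v‖ := norm_pos_iff.2 hv
  have hna : ∀ τ μ, 0 < ‖a τ μ‖ := fun τ μ =>
    norm_pos_iff.2 (fun h0 => ha τ μ ⟨0, hn⟩ (by rw [h0]; rfl))
  have htM : (0:ℝ) < (t : ℝ) * M := by
    have := Nat.cast_pos (α := ℝ) |>.2 ht
    have := Nat.cast_pos (α := ℝ) |>.2 hM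
    nlinarith
  have hsqtM : 0 < Real.sqrt ((t:ℝ) * M) := Real.sqrt_pos.2 htM
  have hε'pos : 0 < ε' := by
    rw [hε']; exact div_pos hεa (by positivity)
  have hεa_eq : εa = ε' * (Real.sqrt ((t:ℝ) * M) * ‖v‖ * XF) := by
    rw [hε']; field_simp
  have hn₀R : (0:ℝ) < n₀ := Nat.cast_pos.2 hn₀pos
  -- the weights
  set p : Fin t × Fin M × Fin n → ℝ :=
    fun x => (X x.1 x.2.1)^2/XF^2 * ((a x.1 x.2.1 x.2.2)^2/‖a x.1 x.2.1‖^2) with hp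
  have hpnonneg : ∀ x, 0 ≤ p x := fun x => by positivity
  have hdist' : ∀ q i (x : Fin t × Fin M × Fin n),
      P (U q i ⁻¹' {x}) = ENNReal.ofReal (p x) := by
    rintro q i ⟨τ, μ, k⟩
    rw [← hdist q i τ μ k]
    rfl
  have hexp : ∀ (f : (Fin t × Fin M × Fin n) → ℝ) (q : Fin Q) (i : Fin n₀),
      ∫ ω, f (U q i ω) ∂P = ∑ x, p x * f x := by
    intro f q i
    rw [integral_comp_fintype P (U q i) (hmeas q i) f]
    exact Finset.sum_congr rfl fun x _ => by
      rw [hdist' q i x, ENNReal.toReal_ofReal (hpnonneg x)]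
  -- first moment
  have hterm : ∀ x : Fin t × Fin M × Fin n,
      p x * Zval x = v x.2.2 * (X x.1 x.2.1 * a x.1 x.2.1 x.2.2 / ‖a x.1 x.2.1‖) := by
    rintro ⟨τ, μ, k⟩
    rw [hp, hZval τ μ k]
    have h1 := hX τ μ; have h2 := ha τ μ k; have h3 := (hna τ μ).ne'
    have h4 := hXFpos.ne'
    field_simp
  have hmean : ∑ x, p x * Zval x = c := by
    rw [hc]
    have : ∀ x : Fin t × Fin M × Fin n, True := fun _ => trivial
    calc ∑ x, p x * Zval x
        = ∑ τ, ∑ μ, ∑ k, v k * (X τ μ * a τ μ k / ‖a τ μ‖) := by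
          rw [Fintype.sum_prod_type]
          refine Finset.sum_congr rfl fun τ _ => ?_
          rw [Fintype.sum_prod_type]
          exact Finset.sum_congr rfl fun μ _ => Finset.sum_congr rfl fun k _ => hterm (τ, μ, k)
      _ = ∑ k, W k * v k := by
          have hWk : ∀ k, W k * v k = ∑ τ, ∑ μ, v k * (X τ μ * a τ μ k / ‖a τ μ‖) := by
            intro k
            rw [hW k, Finset.sum_mul]
            exact Finset.sum_congr rfl fun τ _ => by
              rw [Finset.sum_mul]
              exact Finset.sum_congr rfl fun μ _ => by ring
          simp_rw [hWk]
          calc ∑ τ : Fin t, ∑ μ : Fin M, ∑ k : Fin n, v k * (X τ μ * a τ μ k / ‖a τ μ‖)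
              = ∑ τ : Fin t, ∑ k : Fin n, ∑ μ : Fin M, v k * (X τ μ * a τ μ k / ‖a τ μ‖) :=
                Finset.sum_congr rfl fun τ _ => Finset.sum_comm
            _ = ∑ k : Fin n, ∑ τ : Fin t, ∑ μ : Fin M, v k * (X τ μ * a τ μ k / ‖a τ μ‖) :=
                Finset.sum_comm
      _ = ⟪W, v⟫ := by simp [PiLp.inner_apply, RCLike.inner_apply, conj_trivial]; exact Finset.sum_congr rfl fun _ _ => mul_comm _ _
  -- second moment
  have hnv2 : ‖v‖^2 = ∑ k, (v k)^2 := by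
    rw [EuclideanSpace.norm_eq, Real.sq_sqrt (by positivity)]
    simp [Real.norm_eq_abs, sq_abs]
  set B : ℝ := (t:ℝ) * M * ‖v‖^2 * XF^2 with hBdef
  have hBpos : 0 < B := by positivity
  have hsq : ∑ x, p x * (Zval x)^2 = B := by
    have hterm2 : ∀ x : Fin t × Fin M × Fin n,
        p x * (Zval x)^2 = v x.2.2 ^ 2 * XF^2 := by
      rintro ⟨τ, μ, k⟩
      rw [hp, hZval τ μ k]
      have h1 := hX τ μ; have h2 := ha τ μ k; have h3 := (hna τ μ).ne'
      have h4 := hXFpos.ne'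
      field_simp
    rw [Finset.sum_congr rfl fun x _ => hterm2 x]
    simp only [Fintype.sum_prod_type]
    rw [Finset.sum_const, Finset.card_univ, Fintype.card_fin]
    simp only [Finset.sum_const, Finset.card_univ, Fintype.card_fin, nsmul_eq_mul]
    rw [← Finset.sum_mul, ← hnv2, hBdef]
    ring
  -- per-copy random variables
  set Zf : Fin Q → Fin n₀ → Ω → ℝ := fun q i ω => Zval (U q i ω) with hZf
  have hZvalmeas : Measurable Zval := Measurable.of_discrete
  have hZmeas : ∀ q i, Measurable (Zf q i) := fun q i => hZvalmeas.comp (hmeas q i)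
  have hmemℒp : ∀ q i, MemLp (Zf q i) 2 P := by
    intro q i
    refine MemLp.of_bound (hZmeas q i).aestronglyMeasurable (∑ x, |Zval x|)
      (Filter.Eventually.of_forall fun ω => ?_)
    rw [Real.norm_eq_abs]
    exact Finset.single_le_sum (f := fun x => |Zval x|) (fun x _ => abs_nonneg _)
      (Finset.mem_univ _)
  have hEZ : ∀ q i, ∫ ω, Zf q i ω ∂P = c := fun q i => (hexp Zval q i).trans hmean
  have hVarZ : ∀ q i, variance (Zf q i) P ≤ B := by
    intro q i
    rw [variance_eq_sub (hmemℒp q i)]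
    have h2 : ∫ ω, ((Zf q i) ^ 2) ω ∂P = B := by
      have hptw : ∀ ω, ((Zf q i) ^ 2) ω = (fun x => (Zval x)^2) (U q i ω) := fun ω => by
        simp [hZf]
      rw [integral_congr_ae (Filter.Eventually.of_forall hptw),
        hexp (fun x => (Zval x)^2) q i, hsq]
    rw [h2]
    nlinarith [sq_nonneg (∫ ω, Zf q i ω ∂P)]
  -- the block averages
  set A : Fin Q → Ω → ℝ := fun q ω => (1 / n₀ : ℝ) * ∑ i, Zval (U q i ω) with hA
  have hAsum : ∀ q, A q = fun ω => (1 / n₀ : ℝ) * (∑ i, Zf q i) ω := by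
    intro q; funext ω; simp [hA, hZf, Finset.sum_apply]
  have hSmem : ∀ q, MemLp (∑ i, Zf q i) 2 P := fun q =>
    memLp_finset_sum' _ (fun i _ => hmemℒp q i)
  have hAmem : ∀ q, MemLp (A q) 2 P := by
    intro q
    rw [hAsum q]
    exact (hSmem q).const_mul _
  have hEA : ∀ q, ∫ ω, A q ω ∂P = c := by
    intro q
    rw [hAsum q]
    simp_rw [Finset.sum_apply]
    rw [integral_const_mul, integral_finset_sum _ (fun i _ => (hmemℒp q i).integrable one_le_two)]
    rw [Finset.sum_congr rfl (fun i _ => hEZ q i), Finset.sum_const, Finset.card_univ,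
      Fintype.card_fin, nsmul_eq_mul]
    field_simp
  have hVarA : ∀ q, variance (A q) P ≤ B / n₀ := by
    intro q
    rw [hAsum q, variance_const_mul]
    have hvs : variance (∑ i, Zf q i) P = ∑ i, variance (Zf q i) P := by
      refine IndepFun.variance_sum (fun i _ => hmemℒp q i) ?_
      intro i _ j _ hij
      have h1 : ((q, i) : Fin Q × Fin n₀) ≠ (q, j) := by simp [hij]
      exact ((hindep.indepFun h1).comp hZvalmeas hZvalmeas)
    have hsum : ∑ i, variance (Zf q i) P ≤ (n₀ : ℝ) * B := by
      calc ∑ i : Fin n₀, variance (Zf q i) P ≤ ∑ _i : Fin n₀, B :=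
            Finset.sum_le_sum fun i _ => hVarZ q i
        _ = (n₀ : ℝ) * B := by
            rw [Finset.sum_const, Finset.card_univ, Fintype.card_fin, nsmul_eq_mul]
    calc (1 / n₀ : ℝ)^2 * variance (∑ i, Zf q i) P ≤ (1/n₀:ℝ)^2 * ((n₀:ℝ) * B) := by
          rw [hvs]
          exact mul_le_mul_of_nonneg_left hsum (by positivity)
      _ = ((1/↑n₀) * ↑n₀) * ((1/↑n₀) * B) := by ring
      _ = B / n₀ := by
          rw [one_div, inv_mul_cancel₀ hn₀R.ne', one_mul, inv_mul_eq_div]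
  -- Chebyshev for each block
  have hεa2 : εa^2 = ε'^2 * B := by
    rw [hεa_eq, hBdef, mul_pow, mul_pow, mul_pow, Real.sq_sqrt htM.le]
  have hcheb : ∀ q, P {ω | εa ≤ |A q ω - c|} ≤ ENNReal.ofReal (1/4) := by
    intro q
    have h1 := meas_ge_le_variance_div_sq (μ := P) (hAmem q) hεa
    rw [hEA q] at h1
    refine h1.trans (ENNReal.ofReal_le_ofReal ?_)
    rw [div_le_iff₀ (by positivity)]
    have h3 : (4:ℝ) ≤ n₀ * ε'^2 := by
      rw [div_le_iff₀ (by positivity)] at hn₀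
      linarith
    rw [hεa2]
    calc variance (A q) P ≤ B / n₀ := hVarA q
      _ ≤ 1/4 * (ε'^2 * B) := by
          rw [div_le_iff₀ hn₀R]
          have h4 : (4:ℝ) * B ≤ (n₀ * ε'^2) * B := mul_le_mul_of_nonneg_right h3 hBpos.le
          nlinarith
  -- block tuples and the per-block bad events
  set V : Fin Q → Ω → Fin n₀ → Fin t × Fin M × Fin n := fun q ω i => U q i ω with hV
  have hVmeas : ∀ q, Measurable (V q) := fun q => measurable_pi_lambda _ (fun i => hmeas q i)
  set G : Set (Fin n₀ → Fin t × Fin M × Fin n) :=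
    {h | εa < |(1 / n₀ : ℝ) * ∑ i, Zval (h i) - c|} with hG
  have hPbad : ∀ q, P (V q ⁻¹' G) ≤ ENNReal.ofReal (1/4) := by
    intro q
    refine le_trans (measure_mono ?_) (hcheb q)
    intro ω hω
    have hω' : εa < |(1 / n₀ : ℝ) * ∑ i, Zval (V q ω i) - c| := hω
    simp only [Set.mem_setOf_eq]
    exact le_of_lt hω'
  set pq : Fin Q → ℝ := fun q => (P (V q ⁻¹' G)).toReal with hpq
  have hpqle : ∀ q, pq q ≤ 1/4 := by
    intro q
    have h2 := ENNReal.toReal_mono (by simp) (hPbad q)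
    rwa [ENNReal.toReal_ofReal (by norm_num)] at h2
  have hpq0 : ∀ q, 0 ≤ pq q := fun _ => ENNReal.toReal_nonneg
  -- indicators of bad events
  set Bq : Fin Q → Ω → ℝ :=
    fun q => (fun h => G.indicator (fun _ => (1:ℝ)) h) ∘ (V q) with hBq
  have hBqind : ∀ q, Bq q = (V q ⁻¹' G).indicator (fun _ => (1:ℝ)) := by
    intro q; funext ω
    by_cases h : V q ω ∈ G <;>
      simp [hBq, Set.indicator_apply, h, Set.mem_preimage]
  have hGsetmeas : ∀ q, MeasurableSet (V q ⁻¹' G) := fun q =>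
    (hVmeas q) MeasurableSet.of_discrete
  have hBmeas : ∀ q, Measurable (Bq q) := fun q =>
    Measurable.of_discrete.comp (hVmeas q)
  have hindepB : iIndepFun Bq P := by
    have h1 := iIndepFun_blocks U hmeas hindep
    exact h1.comp (fun _ => G.indicator (fun _ => (1:ℝ))) (fun _ => Measurable.of_discrete)
  have hBint : ∀ q, Integrable (Bq q) P := by
    intro q
    rw [hBqind q]
    exact (integrable_const (1:ℝ)).indicator (hGsetmeas q)
  have hEB : ∀ q, ∫ ω, Bq q ω ∂P = pq q := by
    intro q
    rw [hBqind q, integral_indicator_const _ (hGsetmeas q), smul_eq_mul, mul_one, hpq]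
    rfl
  -- mgf bound per block
  set s : ℝ := Real.log 3 with hs
  have hexps : Real.exp s = 3 := Real.exp_log (by norm_num)
  have hs0 : 0 ≤ s := Real.log_nonneg (by norm_num)
  have hptw : ∀ q ω, Real.exp (s * Bq q ω) = 1 + 2 * Bq q ω := by
    intro q ω
    rw [hBqind q]
    by_cases h : ω ∈ V q ⁻¹' G
    · rw [Set.indicator_of_mem h]
      rw [mul_one, hexps]
      norm_num
    · rw [Set.indicator_of_notMem h]
      simp
  have hintexp : ∀ q, Integrable (fun ω => Real.exp (s * Bq q ω)) P := by
    intro q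
    have he : (fun ω => Real.exp (s * Bq q ω)) = fun ω => 1 + 2 * Bq q ω :=
      funext (hptw q)
    rw [he]
    exact (integrable_const 1).add ((hBint q).const_mul 2)
  have hmgf : ∀ q, mgf (Bq q) P s = 1 + 2 * pq q := by
    intro q
    have h0 : mgf (Bq q) P s = ∫ ω, Real.exp (s * Bq q ω) ∂P := rfl
    rw [h0, integral_congr_ae (Filter.Eventually.of_forall (hptw q)),
      integral_add (integrable_const 1) ((hBint q).const_mul 2), integral_const,
      integral_const_mul, hEB q]
    simp
  have hmgfle : ∀ q, mgf (Bq q) P s ≤ 3/2 := by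
    intro q
    rw [hmgf q]
    linarith [hpqle q]
  -- Chernoff bound for the sum of indicators
  have hmgfT : mgf (∑ q, Bq q) P s ≤ (3/2 : ℝ)^Q := by
    rw [hindepB.mgf_sum hBmeas Finset.univ]
    calc ∏ q, mgf (Bq q) P s ≤ ∏ _q : Fin Q, (3/2 : ℝ) :=
          Finset.prod_le_prod (fun q _ => mgf_nonneg) (fun q _ => hmgfle q)
      _ = (3/2 : ℝ)^Q := by
          rw [Finset.prod_const, Finset.card_univ, Fintype.card_fin]
  have hintT : Integrable (fun ω => Real.exp (s * (∑ q, Bq q) ω)) P :=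
    hindepB.integrable_exp_mul_sum hBmeas (fun q _ => hintexp q)
  have hchern := measure_ge_le_exp_mul_mgf (μ := P) (X := ∑ q, Bq q) ((Q:ℝ)/2) hs0 hintT
  -- numeric bound : exp(-s Q/2) (3/2)^Q ≤ exp(-Q/8) ≤ γ
  have hexp14 : Real.exp (1/4 : ℝ) ≤ 4/3 := by
    have h4 : Real.exp (1/4:ℝ)^4 = Real.exp 1 := by
      rw [← Real.exp_nat_mul]; norm_num
    nlinarith [Real.exp_one_lt_d9, Real.exp_pos (1/4:ℝ), sq_nonneg (Real.exp (1/4:ℝ) - 4/3),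
      sq_nonneg (Real.exp (1/4:ℝ)^2 - 16/9), sq_nonneg (Real.exp (1/4:ℝ) + 4/3)]
  have hl34 : Real.log (3/4 : ℝ) ≤ -(1/4) := by
    rw [Real.log_le_iff_le_exp (by norm_num)]
    rw [Real.exp_neg]
    have h1 : ((4:ℝ)/3)⁻¹ ≤ (Real.exp (1/4:ℝ))⁻¹ :=
      inv_anti₀ (Real.exp_pos _) hexp14
    calc (3/4 : ℝ) = ((4:ℝ)/3)⁻¹ := by norm_num
      _ ≤ (Real.exp (1/4:ℝ))⁻¹ := h1
  have hkey : Real.log (3/2 : ℝ) - s/2 ≤ -(1/8) := by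
    have h2 : Real.log (3/4 : ℝ) = 2 * Real.log (3/2 : ℝ) - Real.log 3 := by
      rw [show (3/4:ℝ) = (3/2)^2 / 3 by norm_num,
        Real.log_div (by positivity) (by norm_num), Real.log_pow]
      push_cast; ring
    rw [hs]
    linarith
  have hfinalnum : Real.exp (-s * ((Q:ℝ)/2)) * (3/2 : ℝ)^Q ≤ γ := by
    have h32 : (3/2 : ℝ)^Q = Real.exp ((Q:ℝ) * Real.log (3/2)) := by
      rw [Real.exp_nat_mul, Real.exp_log (by norm_num : (0:ℝ) < 3/2)]
    rw [h32, ← Real.exp_add]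
    have hQ0 : (0:ℝ) ≤ (Q:ℝ) := Nat.cast_nonneg _
    have h3 : -s * ((Q:ℝ)/2) + (Q:ℝ) * Real.log (3/2)
        = (Q:ℝ) * (Real.log (3/2) - s/2) := by ring
    rw [h3]
    have h4 : (Q:ℝ) * (Real.log (3/2) - s/2) ≤ (Q:ℝ) * (-(1/8)) :=
      mul_le_mul_of_nonneg_left hkey hQ0
    have h5 : (Q:ℝ) * (-(1/8)) ≤ Real.log γ := by
      have h6 : Real.log (1/γ) = - Real.log γ := by
        rw [one_div, Real.log_inv]
      linarith [hQ, h6 ▸ hQ]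
    calc Real.exp ((Q:ℝ) * (Real.log (3/2) - s/2))
        ≤ Real.exp (Real.log γ) := Real.exp_le_exp.2 (le_trans h4 h5)
      _ = γ := Real.exp_log hγ0
  -- the final bad event
  set badS : Set Ω := {ω | (Q:ℝ)/2 ≤ (∑ q, Bq q) ω} with hbadS
  have hTmeas : Measurable (∑ q, Bq q) := by
    have he : (∑ q, Bq q) = fun ω => ∑ q, Bq q ω := by
      funext ω; rw [Finset.sum_apply]
    rw [he]
    exact Finset.measurable_sum _ (fun q _ => hBmeas q)
  have hbadmeas : MeasurableSet badS := measurableSet_le measurable_const hTmeas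
  have hPbadS : P badS ≤ ENNReal.ofReal γ := by
    rw [ENNReal.le_ofReal_iff_toReal_le (measure_ne_top P _) hγ0.le]
    refine le_trans hchern ?_
    refine le_trans (mul_le_mul_of_nonneg_left hmgfT (Real.exp_pos _).le) hfinalnum
  -- complement inclusion: few bad blocks ⇒ median is good
  have hincl : badSᶜ ⊆ {ω | |median (fun q => (1 / n₀ : ℝ) * ∑ i, Zval (U q i ω)) - c| ≤ εa} := by
    intro ω hω
    simp only [hbadS, Set.mem_compl_iff, Set.mem_setOf_eq, not_le] at hω
    have hsumcount : (∑ q, Bq q) ω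
        = ((Finset.univ.filter (fun q => ω ∈ V q ⁻¹' G)).card : ℝ) := by
      rw [Finset.sum_apply]
      have : ∀ q, Bq q ω = if ω ∈ V q ⁻¹' G then (1:ℝ) else 0 := by
        intro q; rw [hBqind q]; rfl
      rw [Finset.sum_congr rfl (fun q _ => this q)]
      exact Finset.sum_boole _ _
    set bc := (Finset.univ.filter (fun q => ω ∈ V q ⁻¹' G)).card with hbc
    obtain ⟨m, hm⟩ := hQodd
    have hbcle : bc ≤ Q / 2 := by
      rw [hsumcount] at hω
      have h2 : 2 * (bc:ℝ) < Q := by linarith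
      have h3 : 2 * bc < Q := by exact_mod_cast h2
      omega
    have hgoodiff : ∀ q : Fin Q, (¬ (ω ∈ V q ⁻¹' G))
        ↔ |(1 / n₀ : ℝ) * ∑ i, Zval (U q i ω) - c| ≤ εa := by
      intro q
      rw [Set.mem_preimage, hG]
      simp only [Set.mem_setOf_eq, not_lt]
      exact Iff.rfl
    have hcompl := Finset.card_filter_add_card_filter_not
      (s := (Finset.univ : Finset (Fin Q))) (fun q => ω ∈ V q ⁻¹' G)
    rw [Finset.card_univ, Fintype.card_fin] at hcompl
    have hfilt : (Finset.univ.filter (fun q => ¬ (ω ∈ V q ⁻¹' G))).card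
        = (Finset.univ.filter
            (fun q => |(1 / n₀ : ℝ) * ∑ i, Zval (U q i ω) - c| ≤ εa)).card := by
      congr 1
      exact Finset.filter_congr (fun q _ => by rw [hgoodiff q])
    have hgood : Q / 2 + 1 ≤ (Finset.univ.filter
        (fun q => |(1 / n₀ : ℝ) * ∑ i, Zval (U q i ω) - c| ≤ εa)).card := by
      rw [← hfilt]
      omega
    exact abs_median_sub_le ⟨m, hm⟩ _ c εa hgood
  -- conclusion
  calc ENNReal.ofReal (1 - γ) = 1 - ENNReal.ofReal γ := by
        rw [ENNReal.ofReal_sub _ hγ0.le, ENNReal.ofReal_one]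
    _ ≤ 1 - P badS := tsub_le_tsub_left hPbadS 1
    _ = P badSᶜ := (prob_compl_eq_one_sub hbadmeas).symm
    _ ≤ P {ω | |median (fun q => (1 / n₀ : ℝ) * ∑ i, Zval (U q i ω)) - c| ≤ εa} :=
        measure_mono hincl
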